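/- arXiv:2101.05141 — 5 statements merged into one kernel-verified Lean document; each statement's English description precedes it below -/
import Mathlib

section
/- Let s ∈ (0,1), t ∈ [2s, 2+2s], ε ∈ (0, 2s], k ∈ (0,1], and let M, N be nonnegative integers. Then there exists a constant C depending only on s and λ₁ (and not on k, M, N, ε, t, or f) such that for every real sequence f = (f_j)_{j≥1} with ∑_{j≥1} λ_j^{t-2s} f_j² < ∞, the sinc approximation u_k := Q_k^{-s} f satisfies ‖u_k‖_{Ḣ^{t-ε}} ≤ C · max(1, ε^{-1}) · ‖f‖_{Ḣ^{t-2s}}. -/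
open Finset

lemma geom_range_le {r : ℝ} (h0 : 0 ≤ r) (h1 : r < 1) (n : ℕ) :
    ∑ i ∈ Finset.range n, r ^ i ≤ (1 - r)⁻¹ := by
  calc ∑ i ∈ Finset.range n, r ^ i ≤ ∑' i : ℕ, r ^ i :=
        Summable.sum_le_tsum _ (fun i _ => pow_nonneg h0 i) (summable_geometric_of_lt_one h0 h1)
    _ = (1 - r)⁻¹ := tsum_geometric_of_lt_one h0 h1

lemma icc_neg_eq (M : ℕ) :
    Finset.Icc (-(M:ℤ)) 0 = Finset.map ⟨fun i : ℕ => -(i:ℤ), fun a b h => by simpa using h⟩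
      (Finset.range (M+1)) := by
  ext x
  simp only [Finset.mem_Icc, Finset.mem_map, Finset.mem_range, Function.Embedding.coeFn_mk]
  constructor
  · rintro ⟨h1, h2⟩; exact ⟨(-x).toNat, by omega, by show -(((-x).toNat : ℕ) : ℤ) = x; omega⟩
  · rintro ⟨i, hi, rfl⟩; show -(M:ℤ) ≤ -(i:ℤ) ∧ -(i:ℤ) ≤ 0; omega

lemma icc_pos_eq (N : ℕ) :
    Finset.Icc (1:ℤ) (N:ℤ) = Finset.map ⟨fun i : ℕ => (i:ℤ)+1, fun a b h => by simpa using h⟩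
      (Finset.range N) := by
  ext x
  simp only [Finset.mem_Icc, Finset.mem_map, Finset.mem_range, Function.Embedding.coeFn_mk]
  constructor
  · rintro ⟨h1, h2⟩; exact ⟨(x-1).toNat, by omega, by show (((x-1).toNat : ℕ) : ℤ) + 1 = x; omega⟩
  · rintro ⟨i, hi, rfl⟩; show (1:ℤ) ≤ (i:ℤ) + 1 ∧ (i:ℤ) + 1 ≤ N; omega

lemma sum_exp_neg_side (c : ℝ) (hc : 0 < c) (M : ℕ) :
    ∑ ℓ ∈ Finset.Icc (-(M:ℤ)) 0, Real.exp (c * ℓ) ≤ (1 - Real.exp (-c))⁻¹ := by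
  have hr : Real.exp (-c) < 1 := by rw [Real.exp_lt_one_iff]; linarith
  rw [icc_neg_eq, Finset.sum_map]
  refine le_trans (le_of_eq (Finset.sum_congr rfl fun i _ => ?_))
    (geom_range_le (Real.exp_nonneg (-c)) hr (M+1))
  show Real.exp (c * ((-(i:ℤ) : ℤ) : ℝ)) = Real.exp (-c) ^ i
  rw [← Real.exp_nat_mul]
  congr 1
  push_cast
  ring

lemma sum_exp_pos_side (c : ℝ) (hc : 0 < c) (N : ℕ) :
    ∑ ℓ ∈ Finset.Icc (1:ℤ) (N:ℤ), Real.exp (-c * ℓ) ≤ Real.exp (-c) * (1 - Real.exp (-c))⁻¹ := by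
  have hr : Real.exp (-c) < 1 := by rw [Real.exp_lt_one_iff]; linarith
  rw [icc_pos_eq, Finset.sum_map]
  have step1 : ∀ i ∈ Finset.range N,
      Real.exp (-c * ((⟨fun i : ℕ => (i:ℤ)+1, fun a b h => by simpa using h⟩ :
        ℕ ↪ ℤ) i : ℤ)) = Real.exp (-c) * (Real.exp (-c)) ^ i := by
    intro i _
    show Real.exp (-c * (((i:ℤ)+1 : ℤ) : ℝ)) = Real.exp (-c) * Real.exp (-c) ^ i
    rw [← Real.exp_nat_mul, ← Real.exp_add]
    congr 1
    push_cast
    ring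
  rw [Finset.sum_congr rfl step1, ← Finset.mul_sum]
  exact mul_le_mul_of_nonneg_left (geom_range_le (Real.exp_nonneg _) hr _) (Real.exp_nonneg _)

lemma one_sub_exp_inv_le (c : ℝ) (hc : 0 < c) (hc1 : c ≤ 1) :
    (1 - Real.exp (-c))⁻¹ ≤ 2 / c := by
  have he : Real.exp (-c) ≤ (1 + c)⁻¹ := by
    rw [Real.exp_neg]
    exact inv_anti₀ (by linarith) (by linarith [Real.add_one_le_exp c])
  have h2 : c / 2 ≤ 1 - Real.exp (-c) := by
    have : (1 + c)⁻¹ ≤ 1 - c / 2 := by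
      rw [inv_le_iff_one_le_mul₀ (by linarith)]
      nlinarith
    linarith
  calc (1 - Real.exp (-c))⁻¹ ≤ (c / 2)⁻¹ := inv_anti₀ (by linarith) h2
    _ = 2 / c := by rw [inv_div]

lemma exp_div_one_sub_le (c : ℝ) (hc : 0 < c) :
    Real.exp (-c) * (1 - Real.exp (-c))⁻¹ ≤ 1 / c := by
  have hcexp : c + 1 ≤ Real.exp c := by linarith [Real.add_one_le_exp c]
  have hpos : (0:ℝ) < Real.exp c - 1 := by linarith
  have h := Real.exp_pos c
  have heq : Real.exp (-c) * (1 - Real.exp (-c))⁻¹ = (Real.exp c - 1)⁻¹ := by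
    rw [Real.exp_neg]
    field_simp
  rw [heq, one_div]
  exact inv_anti₀ hc (by linarith)

lemma key_bound (s lam1 : ℝ) (hs0 : 0 < s) (hs1 : s < 1) (hlam1 : 0 < lam1)
    (lam ε k : ℝ) (hlam : lam1 ≤ lam) (hε : 0 < ε) (hεs : ε ≤ 2*s) (hk : 0 < k) (hk1 : k ≤ 1)
    (M N : ℕ) :
    k * ∑ ℓ ∈ Finset.Icc (-(M:ℤ)) (N:ℤ),
        Real.exp ((1-s)*(k*ℓ)) * (Real.exp (k*ℓ) + lam)⁻¹
      ≤ (2/(1-s) * max 1 lam1⁻¹ + 2) * max 1 ε⁻¹ * lam ^ (-(s - ε/2)) := by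
  have hlam0 : 0 < lam := lt_of_lt_of_le hlam1 hlam
  set σ : ℝ := s - ε/2 with hσdef
  have hσ0 : 0 ≤ σ := by simp only [hσdef]; linarith
  have hσ1 : σ < 1 := by simp only [hσdef]; linarith
  -- split
  have hsub : Finset.Icc (-(M:ℤ)) (N:ℤ) ⊆
      Finset.Icc (-(M:ℤ)) 0 ∪ Finset.Icc (1:ℤ) (N:ℤ) := by
    intro ℓ hℓ
    simp only [Finset.mem_Icc, Finset.mem_union] at *
    omega
  have hdisj : Disjoint (Finset.Icc (-(M:ℤ)) 0) (Finset.Icc (1:ℤ) (N:ℤ)) := by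
    rw [Finset.disjoint_left]
    intro a ha hb
    simp only [Finset.mem_Icc] at *
    omega
  have htermnn : ∀ ℓ : ℤ, 0 ≤ Real.exp ((1-s)*(k*ℓ)) * (Real.exp (k*ℓ) + lam)⁻¹ := by
    intro ℓ
    positivity
  have hsplit : ∑ ℓ ∈ Finset.Icc (-(M:ℤ)) (N:ℤ),
        Real.exp ((1-s)*(k*ℓ)) * (Real.exp (k*ℓ) + lam)⁻¹
      ≤ (∑ ℓ ∈ Finset.Icc (-(M:ℤ)) 0, Real.exp ((1-s)*(k*ℓ)) * (Real.exp (k*ℓ) + lam)⁻¹)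
        + ∑ ℓ ∈ Finset.Icc (1:ℤ) (N:ℤ), Real.exp ((1-s)*(k*ℓ)) * (Real.exp (k*ℓ) + lam)⁻¹ := by
    rw [← Finset.sum_union hdisj]
    exact Finset.sum_le_sum_of_subset_of_nonneg hsub (fun ℓ _ _ => htermnn ℓ)
  -- part 1
  have hpart1 : ∑ ℓ ∈ Finset.Icc (-(M:ℤ)) 0,
        Real.exp ((1-s)*(k*ℓ)) * (Real.exp (k*ℓ) + lam)⁻¹
      ≤ lam⁻¹ * (1 - Real.exp (-((1-s)*k)))⁻¹ := by
    have h1 : ∀ ℓ : ℤ, Real.exp ((1-s)*(k*ℓ)) * (Real.exp (k*ℓ) + lam)⁻¹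
        ≤ Real.exp (((1-s)*k) * ℓ) * lam⁻¹ := by
      intro ℓ
      rw [show (1-s)*(k*(ℓ:ℝ)) = ((1-s)*k)*ℓ by ring]
      exact mul_le_mul_of_nonneg_left
        (inv_anti₀ hlam0 (le_add_of_nonneg_left (Real.exp_nonneg _))) (Real.exp_nonneg _)
    calc ∑ ℓ ∈ Finset.Icc (-(M:ℤ)) 0, Real.exp ((1-s)*(k*ℓ)) * (Real.exp (k*ℓ) + lam)⁻¹
        ≤ ∑ ℓ ∈ Finset.Icc (-(M:ℤ)) 0, Real.exp (((1-s)*k) * ℓ) * lam⁻¹ :=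
          Finset.sum_le_sum (fun ℓ _ => h1 ℓ)
      _ = (∑ ℓ ∈ Finset.Icc (-(M:ℤ)) 0, Real.exp (((1-s)*k) * ℓ)) * lam⁻¹ := by
          rw [Finset.sum_mul]
      _ ≤ (1 - Real.exp (-((1-s)*k)))⁻¹ * lam⁻¹ :=
          mul_le_mul_of_nonneg_right
            (sum_exp_neg_side ((1-s)*k) (by nlinarith) M) (by positivity)
      _ = lam⁻¹ * (1 - Real.exp (-((1-s)*k)))⁻¹ := mul_comm _ _
  -- part 2
  have hpart2 : ∑ ℓ ∈ Finset.Icc (1:ℤ) (N:ℤ),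
        Real.exp ((1-s)*(k*ℓ)) * (Real.exp (k*ℓ) + lam)⁻¹
      ≤ lam ^ (-σ) * (Real.exp (-(k*ε/2)) * (1 - Real.exp (-(k*ε/2)))⁻¹) := by
    have h2 : ∀ ℓ ∈ Finset.Icc (1:ℤ) (N:ℤ),
        Real.exp ((1-s)*(k*ℓ)) * (Real.exp (k*ℓ) + lam)⁻¹
        ≤ Real.exp (-(k*ε/2) * ℓ) * lam ^ (-σ) := by
      intro ℓ hℓ
      have hamgm : Real.exp (k*ℓ) ^ (1-σ) * lam ^ σ ≤ Real.exp (k*ℓ) + lam := by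
        calc Real.exp (k*ℓ) ^ (1-σ) * lam ^ σ
            ≤ (1-σ) * Real.exp (k*ℓ) + σ * lam :=
              Real.geom_mean_le_arith_mean2_weighted (by linarith) hσ0
                (Real.exp_nonneg _) hlam0.le (by ring)
          _ ≤ Real.exp (k*ℓ) + lam := by nlinarith [Real.exp_pos (k*(ℓ:ℝ))]
      have hgm_pos : 0 < Real.exp (k*ℓ) ^ (1-σ) * lam ^ σ := by positivity
      have hinv : (Real.exp (k*ℓ) + lam)⁻¹ ≤ (Real.exp (k*ℓ) ^ (1-σ) * lam ^ σ)⁻¹ :=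
        inv_anti₀ hgm_pos hamgm
      calc Real.exp ((1-s)*(k*ℓ)) * (Real.exp (k*ℓ) + lam)⁻¹
          ≤ Real.exp ((1-s)*(k*ℓ)) * (Real.exp (k*ℓ) ^ (1-σ) * lam ^ σ)⁻¹ :=
            mul_le_mul_of_nonneg_left hinv (Real.exp_nonneg _)
        _ = Real.exp (-(k*ε/2) * ℓ) * lam ^ (-σ) := by
            rw [← Real.exp_mul, mul_inv, ← Real.exp_neg, ← mul_assoc, ← Real.exp_add,
              Real.rpow_neg hlam0.le]
            congr 2
            simp only [hσdef]
            ring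
    calc ∑ ℓ ∈ Finset.Icc (1:ℤ) (N:ℤ), Real.exp ((1-s)*(k*ℓ)) * (Real.exp (k*ℓ) + lam)⁻¹
        ≤ ∑ ℓ ∈ Finset.Icc (1:ℤ) (N:ℤ), Real.exp (-(k*ε/2) * ℓ) * lam ^ (-σ) :=
          Finset.sum_le_sum h2
      _ = (∑ ℓ ∈ Finset.Icc (1:ℤ) (N:ℤ), Real.exp (-(k*ε/2) * ℓ)) * lam ^ (-σ) := by
          rw [Finset.sum_mul]
      _ ≤ (Real.exp (-(k*ε/2)) * (1 - Real.exp (-(k*ε/2)))⁻¹) * lam ^ (-σ) :=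
          mul_le_mul_of_nonneg_right (sum_exp_pos_side (k*ε/2) (by positivity) N)
            (by positivity)
      _ = _ := mul_comm _ _
  -- quantitative
  have hq1 : k * (lam⁻¹ * (1 - Real.exp (-((1-s)*k)))⁻¹) ≤ 2/(1-s) * lam⁻¹ := by
    have h := one_sub_exp_inv_le ((1-s)*k) (by nlinarith) (by nlinarith)
    have : k * (1 - Real.exp (-((1-s)*k)))⁻¹ ≤ 2/(1-s) := by
      calc k * (1 - Real.exp (-((1-s)*k)))⁻¹ ≤ k * (2/((1-s)*k)) :=
            mul_le_mul_of_nonneg_left h hk.le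
        _ = 2/(1-s) := by
            rw [← mul_div_assoc, mul_comm (1-s) k, mul_div_mul_left _ _ hk.ne']
    calc k * (lam⁻¹ * (1 - Real.exp (-((1-s)*k)))⁻¹)
        = (k * (1 - Real.exp (-((1-s)*k)))⁻¹) * lam⁻¹ := by ring
      _ ≤ 2/(1-s) * lam⁻¹ := mul_le_mul_of_nonneg_right this (by positivity)
  have hq2 : k * (lam ^ (-σ) * (Real.exp (-(k*ε/2)) * (1 - Real.exp (-(k*ε/2)))⁻¹))
      ≤ 2 * ε⁻¹ * lam ^ (-σ) := by
    have h := exp_div_one_sub_le (k*ε/2) (by positivity)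
    have : k * (Real.exp (-(k*ε/2)) * (1 - Real.exp (-(k*ε/2)))⁻¹) ≤ 2 * ε⁻¹ := by
      calc k * (Real.exp (-(k*ε/2)) * (1 - Real.exp (-(k*ε/2)))⁻¹) ≤ k * (1/(k*ε/2)) :=
            mul_le_mul_of_nonneg_left h hk.le
        _ = 2 * ε⁻¹ := by
            rw [one_div_div, ← mul_div_assoc, mul_comm k 2, mul_div_assoc,
              div_mul_eq_div_div, div_self hk.ne', one_div]
    calc k * (lam ^ (-σ) * (Real.exp (-(k*ε/2)) * (1 - Real.exp (-(k*ε/2)))⁻¹))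
        = (k * (Real.exp (-(k*ε/2)) * (1 - Real.exp (-(k*ε/2)))⁻¹)) * lam ^ (-σ) := by ring
      _ ≤ 2 * ε⁻¹ * lam ^ (-σ) := mul_le_mul_of_nonneg_right this (by positivity)
  -- lam⁻¹ ≤ max 1 lam1⁻¹ * lam ^ (-σ)
  have hlaminv : lam⁻¹ ≤ max 1 lam1⁻¹ * lam ^ (-σ) := by
    have e1 : lam⁻¹ = lam ^ (σ-1) * lam ^ (-σ) := by
      rw [← Real.rpow_add hlam0, show σ-1 + -σ = (-1:ℝ) by ring, Real.rpow_neg_one]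
    rw [e1]
    refine mul_le_mul_of_nonneg_right ?_ (by positivity)
    have e2 : lam ^ (σ-1) ≤ lam1 ^ (σ-1) :=
      Real.rpow_le_rpow_of_nonpos hlam1 hlam (by linarith)
    refine e2.trans ?_
    rcases le_total 1 lam1 with h | h
    · exact le_trans (Real.rpow_le_one_of_one_le_of_nonpos h (by linarith)) (le_max_left _ _)
    · refine le_trans ?_ (le_max_right _ _)
      have := Real.rpow_le_rpow_of_exponent_ge hlam1 h (show (-1:ℝ) ≤ σ-1 by linarith)
      rwa [Real.rpow_neg_one] at this
  -- combine
  have hmax1 : (1:ℝ) ≤ max 1 ε⁻¹ := le_max_left _ _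
  have hεinvle : ε⁻¹ ≤ max 1 ε⁻¹ := le_max_right _ _
  have hM1 : (1:ℝ) ≤ max 1 lam1⁻¹ := le_max_left _ _
  have hlamσ : 0 ≤ lam ^ (-σ) := by positivity
  have hfinal : k * ∑ ℓ ∈ Finset.Icc (-(M:ℤ)) (N:ℤ),
        Real.exp ((1-s)*(k*ℓ)) * (Real.exp (k*ℓ) + lam)⁻¹
      ≤ 2/(1-s) * (max 1 lam1⁻¹ * lam ^ (-σ)) + 2 * ε⁻¹ * lam ^ (-σ) := by
    have := mul_le_mul_of_nonneg_left hsplit hk.le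
    have h1 := hq1.trans (mul_le_mul_of_nonneg_left hlaminv
      (div_nonneg (by norm_num) (by linarith : (0:ℝ) ≤ 1 - s)))
    nlinarith [hq2, mul_le_mul_of_nonneg_left hpart1 hk.le,
      mul_le_mul_of_nonneg_left hpart2 hk.le]
  refine hfinal.trans ?_
  have h2s : (0:ℝ) ≤ 2/(1-s) := div_nonneg (by norm_num) (by linarith)
  have hεnn : 0 ≤ ε⁻¹ := by positivity
  show _ ≤ (2/(1-s) * max 1 lam1⁻¹ + 2) * max 1 ε⁻¹ * lam ^ (-σ)
  nlinarith [mul_nonneg (mul_nonneg h2s (le_trans zero_le_one hM1)) hlamσ,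
    mul_le_mul_of_nonneg_right (mul_le_mul_of_nonneg_left hmax1
      (mul_nonneg h2s (le_trans zero_le_one hM1))) hlamσ,
    mul_le_mul_of_nonneg_right (mul_le_mul_of_nonneg_left hεinvle (by norm_num : (0:ℝ) ≤ 2)) hlamσ]

lemma rpow_sq_aux (x : ℝ) (hx : 0 < x) (a : ℝ) : (x ^ a) ^ 2 = x ^ (2 * a) := by
  rw [← Real.rpow_natCast (x ^ a) 2, ← Real.rpow_mul hx.le]
  norm_num
  rw [mul_comm]


/-- Stability of the sinc quadrature (Lemma 4.1, spectral form): for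
`s ∈ (0,1)` and `λ₁ > 0` there is a constant `C` depending only on `s` and `λ₁` such that
for all eigenvalue sequences `λ_j ≥ λ₁`, all `t ∈ [2s, 2+2s]`, `ε ∈ (0, 2s]`, `k ∈ (0,1]`,
all nonnegative integers `M, N` and all `f` with finite `Ḣ^{t-2s}` norm, the sinc
approximation `u_k = Q_k^{-s} f` satisfies
`‖u_k‖_{Ḣ^{t-ε}} ≤ C max(1, ε⁻¹) ‖f‖_{Ḣ^{t-2s}}`. -/
theorem sinc_stability (s lam1 : ℝ) (hs0 : 0 < s) (hs1 : s < 1) (hlam1 : 0 < lam1) :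
    ∃ C : ℝ, 0 < C ∧
      ∀ (lam : ℕ → ℝ), (∀ j, lam1 ≤ lam j) →
      ∀ (t ε k : ℝ), 2 * s ≤ t → t ≤ 2 + 2 * s → 0 < ε → ε ≤ 2 * s → 0 < k → k ≤ 1 →
      ∀ (M N : ℕ) (f : ℕ → ℝ), Summable (fun j => lam j ^ (t - 2 * s) * f j ^ 2) →
        Summable (fun j => lam j ^ (t - ε) *
          ((k * Real.sin (Real.pi * s) / Real.pi) *
            ∑ ℓ ∈ Finset.Icc (-(M : ℤ)) (N : ℤ),
              Real.exp ((1 - s) * (k * ℓ)) * (Real.exp (k * ℓ) + lam j)⁻¹ * f j) ^ 2) ∧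
        Real.sqrt (∑' j, lam j ^ (t - ε) *
          ((k * Real.sin (Real.pi * s) / Real.pi) *
            ∑ ℓ ∈ Finset.Icc (-(M : ℤ)) (N : ℤ),
              Real.exp ((1 - s) * (k * ℓ)) * (Real.exp (k * ℓ) + lam j)⁻¹ * f j) ^ 2) ≤
        C * max 1 ε⁻¹ * Real.sqrt (∑' j, lam j ^ (t - 2 * s) * f j ^ 2) := by
  refine ⟨2/(1-s) * max 1 lam1⁻¹ + 2, ?_, ?_⟩
  · have h0 : (0:ℝ) ≤ 2/(1-s) := div_nonneg (by norm_num) (by linarith)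
    have h1 : (0:ℝ) ≤ 2/(1-s) * max 1 lam1⁻¹ :=
      mul_nonneg h0 (le_trans zero_le_one (le_max_left _ _))
    linarith
  intro lam hlam t ε k ht1 ht2 hε hεs hk hk1 M N f hsum
  set C : ℝ := 2/(1-s) * max 1 lam1⁻¹ + 2 with hCdef
  set K : ℝ := C * max 1 ε⁻¹ with hKdef
  have hC0 : 0 < C := by
    have h0 : (0:ℝ) ≤ 2/(1-s) := div_nonneg (by norm_num) (by linarith)
    have h1 : (0:ℝ) ≤ 2/(1-s) * max 1 lam1⁻¹ :=
      mul_nonneg h0 (le_trans zero_le_one (le_max_left _ _))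
    rw [hCdef]; linarith
  have hK0 : 0 ≤ K := le_of_lt (mul_pos hC0 (lt_of_lt_of_le one_pos (le_max_left _ _)))
  have hlam0 : ∀ j, 0 < lam j := fun j => lt_of_lt_of_le hlam1 (hlam j)
  set T : ℕ → ℝ := fun j => ∑ ℓ ∈ Finset.Icc (-(M:ℤ)) (N:ℤ),
    Real.exp ((1-s)*(k*ℓ)) * (Real.exp (k*ℓ) + lam j)⁻¹ with hTdef
  set A : ℕ → ℝ := fun j => k * Real.sin (Real.pi * s) / Real.pi * T j with hAdef
  have hTnn : ∀ j, 0 ≤ T j := by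
    intro j
    apply Finset.sum_nonneg
    intro ℓ _
    have := hlam0 j
    positivity
  have hsinnn : 0 ≤ Real.sin (Real.pi * s) :=
    Real.sin_nonneg_of_nonneg_of_le_pi (by positivity)
      (by nlinarith [Real.pi_pos])
  have hAnn : ∀ j, 0 ≤ A j := by
    intro j
    exact mul_nonneg (div_nonneg (mul_nonneg hk.le hsinnn) Real.pi_pos.le) (hTnn j)
  have hAle : ∀ j, A j ≤ K * lam j ^ (-(s - ε/2)) := by
    intro j
    have h1 : A j ≤ k * T j := by
      have : k * Real.sin (Real.pi * s) / Real.pi ≤ k := by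
        rw [div_le_iff₀ Real.pi_pos]
        nlinarith [Real.sin_le_one (Real.pi * s), Real.pi_gt_three]
      exact mul_le_mul_of_nonneg_right this (hTnn j)
    exact h1.trans (key_bound s lam1 hs0 hs1 hlam1 (lam j) ε k (hlam j) hε hεs hk hk1 M N)
  -- pointwise bound
  have hpt : ∀ j, lam j ^ (t-ε) * (A j * f j) ^ 2 ≤ K^2 * (lam j ^ (t-2*s) * f j ^ 2) := by
    intro j
    have hA2 : (A j) ^ 2 ≤ (K * lam j ^ (-(s-ε/2))) ^ 2 :=
      pow_le_pow_left₀ (hAnn j) (hAle j) 2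
    have e : lam j ^ (t-ε) * ((K * lam j ^ (-(s-ε/2))) ^ 2 * f j ^ 2)
        = K^2 * (lam j ^ (t-2*s) * f j ^ 2) := by
      rw [mul_pow, rpow_sq_aux _ (hlam0 j)]
      rw [show lam j ^ (t-ε) * (K^2 * lam j ^ (2 * -(s-ε/2)) * f j ^ 2)
          = K^2 * (lam j ^ (t-ε) * lam j ^ (2 * -(s-ε/2)) * f j ^ 2) by ring]
      rw [← Real.rpow_add (hlam0 j)]
      rw [show t - ε + 2 * -(s-ε/2) = t - 2*s by ring]
    calc lam j ^ (t-ε) * (A j * f j) ^ 2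
        = lam j ^ (t-ε) * ((A j)^2 * f j ^ 2) := by rw [mul_pow]
      _ ≤ lam j ^ (t-ε) * ((K * lam j ^ (-(s-ε/2)))^2 * f j ^2) := by
          apply mul_le_mul_of_nonneg_left _ (Real.rpow_nonneg (hlam0 j).le _)
          exact mul_le_mul_of_nonneg_right hA2 (sq_nonneg _)
      _ = K^2 * (lam j ^ (t-2*s) * f j ^ 2) := e
  -- identify the statement's summand
  have hrw : ∀ j, (k * Real.sin (Real.pi * s) / Real.pi) *
      ∑ ℓ ∈ Finset.Icc (-(M:ℤ)) (N:ℤ),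
        Real.exp ((1-s)*(k*ℓ)) * (Real.exp (k*ℓ) + lam j)⁻¹ * f j = A j * f j := by
    intro j
    rw [← Finset.sum_mul, hAdef]
    ring
  have hfun : (fun j => lam j ^ (t - ε) *
      ((k * Real.sin (Real.pi * s) / Real.pi) *
        ∑ ℓ ∈ Finset.Icc (-(M:ℤ)) (N:ℤ),
          Real.exp ((1 - s) * (k * ℓ)) * (Real.exp (k * ℓ) + lam j)⁻¹ * f j) ^ 2)
      = fun j => lam j ^ (t-ε) * (A j * f j)^2 := funext fun j => by rw [hrw j]
  have hnn : ∀ j, 0 ≤ lam j ^ (t-ε) * (A j * f j)^2 := by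
    intro j
    have := hlam0 j
    positivity
  have hsum2 : Summable (fun j => lam j ^ (t-ε) * (A j * f j)^2) :=
    Summable.of_nonneg_of_le hnn hpt (hsum.mul_left (K^2))
  constructor
  · rw [hfun]; exact hsum2
  · rw [hfun]
    have htsum : ∑' j, lam j ^ (t-ε) * (A j * f j)^2
        ≤ K^2 * ∑' j, lam j ^ (t-2*s) * f j ^ 2 := by
      calc ∑' j, lam j ^ (t-ε) * (A j * f j)^2
          ≤ ∑' j, K^2 * (lam j ^ (t-2*s) * f j ^ 2) :=
            Summable.tsum_le_tsum hpt hsum2 (hsum.mul_left (K^2))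
        _ = K^2 * ∑' j, lam j ^ (t-2*s) * f j ^ 2 := tsum_mul_left
    calc Real.sqrt (∑' j, lam j ^ (t-ε) * (A j * f j)^2)
        ≤ Real.sqrt (K^2 * ∑' j, lam j ^ (t-2*s) * f j ^ 2) := Real.sqrt_le_sqrt htsum
      _ = K * Real.sqrt (∑' j, lam j ^ (t-2*s) * f j ^ 2) := by
          rw [Real.sqrt_mul (sq_nonneg K), Real.sqrt_sq hK0]
      _ = C * max 1 ε⁻¹ * Real.sqrt (∑' j, lam j ^ (t-2*s) * f j ^ 2) := by rw [hKdef]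
end

section
/- Let s ∈ (0,1), k > 0, and let M, N be nonnegative integers. Then for every f ∈ ℓ², the sinc approximation satisfies ‖Q_k^{-s} f‖ ≤ (sin(πs)/π) · max(1, λ₁^{-1}) · (1/s + 1/(1-s) + 2k) · ‖f‖; in particular Q_k^{-s} is bounded on ℓ² uniformly in M and N and, for k ≤ 1, uniformly in k. -/
open Finset Real

lemma geom_finset_le (r : ℝ) (h0 : 0 ≤ r) (h1 : r < 1) (t : Finset ℕ) :
    ∑ n ∈ t, r ^ n ≤ (1 - r)⁻¹ := by
  rw [← tsum_geometric_of_lt_one h0 h1]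
  exact Summable.sum_le_tsum t (fun i _ => pow_nonneg h0 i) (summable_geometric_of_lt_one h0 h1)

/-- Core scalar bound. -/
lemma sinc_sum_core (lam1 : ℝ) (hlam1 : 0 < lam1) (lamj : ℝ) (hlamj : lam1 ≤ lamj)
    (s k : ℝ) (hs0 : 0 < s) (hs1 : s < 1) (hk : 0 < k) (M N : ℕ) :
    k * ∑ ℓ ∈ Finset.Icc (-(M : ℤ)) (N : ℤ),
        Real.exp ((1 - s) * (k * ℓ)) * (Real.exp (k * ℓ) + lamj)⁻¹
      ≤ max 1 lam1⁻¹ * (1 / s + 1 / (1 - s) + 2 * k) := by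
  have hs1' : 0 < 1 - s := by linarith
  have hlamj0 : 0 < lamj := lt_of_lt_of_le hlam1 hlamj
  have hsplit : Finset.Icc (-(M : ℤ)) (N : ℤ) = Finset.Icc (-(M : ℤ)) 0 ∪ Finset.Ioc 0 (N : ℤ) := by
    ext x
    simp only [Finset.mem_Icc, Finset.mem_Ioc, Finset.mem_union]
    omega
  have hdisj : Disjoint (Finset.Icc (-(M : ℤ)) 0) (Finset.Ioc 0 (N : ℤ)) := by
    simp only [Finset.disjoint_left, Finset.mem_Icc, Finset.mem_Ioc]
    intro x h1 h2
    omega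
  rw [hsplit, Finset.sum_union hdisj]
  -- Part A
  have hA : ∑ ℓ ∈ Finset.Icc (-(M : ℤ)) 0,
      Real.exp ((1 - s) * (k * ℓ)) * (Real.exp (k * ℓ) + lamj)⁻¹
      ≤ lam1⁻¹ * (1 - Real.exp (-((1 - s) * k)))⁻¹ := by
    have h1 : ∀ ℓ ∈ Finset.Icc (-(M : ℤ)) 0,
        Real.exp ((1 - s) * (k * ℓ)) * (Real.exp (k * ℓ) + lamj)⁻¹
          ≤ lam1⁻¹ * Real.exp ((1 - s) * (k * ℓ)) := by
      intro ℓ _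
      rw [mul_comm (lam1⁻¹)]
      refine mul_le_mul_of_nonneg_left ?_ (Real.exp_pos _).le
      refine inv_anti₀ hlam1 ?_
      have := (Real.exp_pos (k * ℓ)).le
      linarith
    refine le_trans (Finset.sum_le_sum h1) ?_
    rw [← Finset.mul_sum]
    refine mul_le_mul_of_nonneg_left ?_ (by positivity)
    -- reindex: ℓ = -m
    have hre : ∑ ℓ ∈ Finset.Icc (-(M : ℤ)) 0, Real.exp ((1 - s) * (k * ℓ))
        = ∑ m ∈ Finset.range (M + 1), (Real.exp (-((1 - s) * k))) ^ m := by
      refine Finset.sum_nbij' (fun ℓ => (-ℓ).toNat) (fun m => -(m : ℤ)) ?_ ?_ ?_ ?_ ?_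
      · intro a ha; simp only [Finset.mem_Icc] at ha; simp only [Finset.mem_range]; omega
      · intro a ha; simp only [Finset.mem_range] at ha; simp only [Finset.mem_Icc]; omega
      · intro a ha; simp only [Finset.mem_Icc] at ha; omega
      · intro a ha; simp only [Finset.mem_range] at ha; omega
      · intro a ha
        simp only [Finset.mem_Icc] at ha
        rw [← Real.exp_nat_mul]
        congr 1
        have hcast : (((-a).toNat : ℕ) : ℝ) = -(a : ℝ) := by
          rw [show (((-a).toNat : ℕ) : ℝ) = ((((-a).toNat : ℕ) : ℤ) : ℝ) by push_cast; ring,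
            Int.toNat_of_nonneg (show (0:ℤ) ≤ -a by omega)]
          push_cast; ring
        rw [hcast]; ring
    rw [hre]
    exact geom_finset_le _ (Real.exp_pos _).le
      (Real.exp_lt_one_iff.2 (by nlinarith)) _
  -- Part B
  have hB : ∑ ℓ ∈ Finset.Ioc 0 (N : ℤ),
      Real.exp ((1 - s) * (k * ℓ)) * (Real.exp (k * ℓ) + lamj)⁻¹
      ≤ Real.exp (-(s * k)) * (1 - Real.exp (-(s * k)))⁻¹ := by
    have h1 : ∀ ℓ ∈ Finset.Ioc 0 (N : ℤ),
        Real.exp ((1 - s) * (k * ℓ)) * (Real.exp (k * ℓ) + lamj)⁻¹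
          ≤ Real.exp (-(s * k * ℓ)) := by
      intro ℓ hℓ
      have h2 : (Real.exp (k * ℓ) + lamj)⁻¹ ≤ (Real.exp (k * ℓ))⁻¹ :=
        inv_anti₀ (Real.exp_pos _) (by linarith)
      calc Real.exp ((1 - s) * (k * ℓ)) * (Real.exp (k * ℓ) + lamj)⁻¹
          ≤ Real.exp ((1 - s) * (k * ℓ)) * (Real.exp (k * ℓ))⁻¹ :=
            mul_le_mul_of_nonneg_left h2 (Real.exp_pos _).le
        _ = Real.exp (-(s * k * ℓ)) := by
            rw [← Real.exp_neg, ← Real.exp_add]; ring_nf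
    refine le_trans (Finset.sum_le_sum h1) ?_
    have hρ0 : (0:ℝ) ≤ Real.exp (-(s * k)) := (Real.exp_pos _).le
    have hρ1 : Real.exp (-(s * k)) < 1 := Real.exp_lt_one_iff.2 (by nlinarith)
    have hre : ∑ ℓ ∈ Finset.Ioc 0 (N : ℤ), Real.exp (-(s * k * ℓ))
        = ∑ m ∈ Finset.range N, Real.exp (-(s * k)) * (Real.exp (-(s * k))) ^ m := by
      refine Finset.sum_nbij' (fun ℓ => (ℓ - 1).toNat) (fun m => (m : ℤ) + 1) ?_ ?_ ?_ ?_ ?_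
      · intro a ha; simp only [Finset.mem_Ioc] at ha; simp only [Finset.mem_range]; omega
      · intro a ha; simp only [Finset.mem_range] at ha; simp only [Finset.mem_Ioc]; omega
      · intro a ha; simp only [Finset.mem_Ioc] at ha; omega
      · intro a ha; simp only [Finset.mem_range] at ha; omega
      · intro a ha
        simp only [Finset.mem_Ioc] at ha
        rw [← Real.exp_nat_mul, ← Real.exp_add]
        congr 1
        have hcast : ((((a-1).toNat : ℕ)) : ℝ) = (a : ℝ) - 1 := by
          rw [show ((((a-1).toNat : ℕ)) : ℝ) = (((((a-1).toNat : ℕ)) : ℤ) : ℝ) by push_cast; ring,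
            Int.toNat_of_nonneg (show (0:ℤ) ≤ a - 1 by omega)]
          push_cast; ring
        rw [hcast]; ring
    rw [hre, ← Finset.mul_sum]
    exact mul_le_mul_of_nonneg_left (geom_finset_le _ hρ0 hρ1 _) hρ0
  -- combine
  have hkA : k * (lam1⁻¹ * (1 - Real.exp (-((1 - s) * k)))⁻¹) ≤ lam1⁻¹ * (1 / (1 - s) + k) := by
    set a := (1 - s) * k with ha_def
    have ha : 0 < a := by positivity
    have h1 : Real.exp (-a) ≤ (1 + a)⁻¹ := by
      rw [Real.exp_neg]
      exact inv_anti₀ (by linarith) ((Real.add_one_le_exp a).trans_eq' (by ring))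
    have h2 : a / (1 + a) ≤ 1 - Real.exp (-a) := by
      have he : 1 - (1 + a)⁻¹ = a / (1 + a) := by field_simp; ring
      linarith [he ▸ sub_le_sub_left h1 1]
    have hpos : 0 < 1 - Real.exp (-a) := by
      have := Real.exp_lt_one_iff.2 (neg_neg_iff_pos.2 ha)
      linarith
    have h3 : (1 - Real.exp (-a))⁻¹ ≤ (1 + a) / a := by
      have := one_div_le_one_div_of_le (show 0 < a / (1 + a) by positivity) h2
      rw [one_div_div] at this
      rwa [one_div] at this
    have h4 : k * ((1 + a) / a) = 1 / (1 - s) + k := by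
      rw [ha_def]; field_simp
    calc k * (lam1⁻¹ * (1 - Real.exp (-a))⁻¹)
        = lam1⁻¹ * (k * (1 - Real.exp (-a))⁻¹) := by ring
      _ ≤ lam1⁻¹ * (k * ((1 + a) / a)) := by
          refine mul_le_mul_of_nonneg_left (mul_le_mul_of_nonneg_left h3 hk.le) (by positivity)
      _ = lam1⁻¹ * (1 / (1 - s) + k) := by rw [h4]
  have hkB : k * (Real.exp (-(s * k)) * (1 - Real.exp (-(s * k)))⁻¹) ≤ 1 / s := by
    have hb : 0 < s * k := by positivity
    have hE1 : 1 < Real.exp (s * k) := by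
      rw [← Real.exp_zero]; exact Real.exp_lt_exp.2 hb
    have hpos : 0 < 1 - Real.exp (-(s * k)) := by
      have := Real.exp_lt_one_iff.2 (neg_neg_iff_pos.2 hb)
      linarith
    have h1 : Real.exp (-(s * k)) * (1 - Real.exp (-(s * k)))⁻¹ = (Real.exp (s * k) - 1)⁻¹ := by
      have hE0 := Real.exp_pos (s * k)
      rw [Real.exp_neg,
        show (1 - (Real.exp (s * k))⁻¹) = (Real.exp (s * k) - 1) / Real.exp (s * k) by field_simp,
        inv_div]
      field_simp
    have h2 : (Real.exp (s * k) - 1)⁻¹ ≤ (s * k)⁻¹ :=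
      inv_anti₀ hb (by linarith [Real.add_one_le_exp (s * k)])
    calc k * (Real.exp (-(s * k)) * (1 - Real.exp (-(s * k)))⁻¹)
        = k * (Real.exp (s * k) - 1)⁻¹ := by rw [h1]
      _ ≤ k * (s * k)⁻¹ := mul_le_mul_of_nonneg_left h2 hk.le
      _ = 1 / s := by field_simp
  have hmax1 : (1:ℝ) ≤ max 1 lam1⁻¹ := le_max_left _ _
  have hmax2 : lam1⁻¹ ≤ max 1 lam1⁻¹ := le_max_right _ _
  have hBpos : (0:ℝ) ≤ 1 / s := by positivity
  have hApos : (0:ℝ) ≤ 1 / (1 - s) + k := by positivity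
  have hAfull : k * ∑ ℓ ∈ Finset.Icc (-(M : ℤ)) 0,
      Real.exp ((1 - s) * (k * ℓ)) * (Real.exp (k * ℓ) + lamj)⁻¹
      ≤ lam1⁻¹ * (1 / (1 - s) + k) :=
    le_trans (mul_le_mul_of_nonneg_left hA hk.le) hkA
  have hBfull : k * ∑ ℓ ∈ Finset.Ioc 0 (N : ℤ),
      Real.exp ((1 - s) * (k * ℓ)) * (Real.exp (k * ℓ) + lamj)⁻¹
      ≤ 1 / s :=
    le_trans (mul_le_mul_of_nonneg_left hB hk.le) hkB
  have e1 : lam1⁻¹ * (1 / (1 - s) + k) ≤ max 1 lam1⁻¹ * (1 / (1 - s) + k) :=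
    mul_le_mul_of_nonneg_right hmax2 hApos
  have e2 : 1 / s ≤ max 1 lam1⁻¹ * (1 / s) := le_mul_of_one_le_left hBpos hmax1
  nlinarith [mul_le_mul_of_nonneg_left (show (0:ℝ) ≤ k by exact hk.le) (le_trans zero_le_one hmax1)]

/-- Uniform `ℓ²`-boundedness of the sinc quadrature operator (spectral
model, eigenvalues `λ_j ≥ λ₁ > 0`): for `s ∈ (0,1)`, `k > 0` and nonnegative integers
`M, N`, for every `f ∈ ℓ²` the sinc approximation `Q_k^{-s} f` lies in `ℓ²` and
`‖Q_k^{-s} f‖ ≤ (sin(πs)/π) max(1, λ₁⁻¹) (1/s + 1/(1-s) + 2k) ‖f‖`. -/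
theorem sinc_l2_bounded (lam1 : ℝ) (hlam1 : 0 < lam1) (lam : ℕ → ℝ)
    (hlam : ∀ j, lam1 ≤ lam j) (s k : ℝ) (hs0 : 0 < s) (hs1 : s < 1) (hk : 0 < k)
    (M N : ℕ) (f : lp (fun _ : ℕ => ℝ) 2) :
    ∃ hmem : Memℓp (fun j =>
        (k * Real.sin (Real.pi * s) / Real.pi) *
          ∑ ℓ ∈ Finset.Icc (-(M : ℤ)) (N : ℤ),
            Real.exp ((1 - s) * (k * ℓ)) * (Real.exp (k * ℓ) + lam j)⁻¹ * f j) 2,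
      ‖(⟨fun j =>
        (k * Real.sin (Real.pi * s) / Real.pi) *
          ∑ ℓ ∈ Finset.Icc (-(M : ℤ)) (N : ℤ),
            Real.exp ((1 - s) * (k * ℓ)) * (Real.exp (k * ℓ) + lam j)⁻¹ * f j,
        hmem⟩ : lp (fun _ : ℕ => ℝ) 2)‖ ≤
        (Real.sin (Real.pi * s) / Real.pi) * max 1 lam1⁻¹ *
          (1 / s + 1 / (1 - s) + 2 * k) * ‖f‖ := by
  have hπ := Real.pi_pos
  have hsin : 0 < Real.sin (Real.pi * s) :=
    Real.sin_pos_of_pos_of_lt_pi (by positivity) (by nlinarith)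
  set C : ℝ := (Real.sin (Real.pi * s) / Real.pi) * max 1 lam1⁻¹ *
      (1 / s + 1 / (1 - s) + 2 * k) with hC_def
  have hC0 : 0 ≤ C := by
    have hm : (0:ℝ) < max 1 lam1⁻¹ := lt_of_lt_of_le one_pos (le_max_left _ _)
    rw [hC_def]
    have h1s : (0:ℝ) < 1 - s := by linarith
    have e1 := one_div_nonneg.2 h1s.le
    have e2 := one_div_nonneg.2 hs0.le
    exact mul_nonneg (mul_nonneg (by positivity) hm.le) (by linarith)
  set g : ℕ → ℝ := fun j =>
      (k * Real.sin (Real.pi * s) / Real.pi) *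
        ∑ ℓ ∈ Finset.Icc (-(M : ℤ)) (N : ℤ),
          Real.exp ((1 - s) * (k * ℓ)) * (Real.exp (k * ℓ) + lam j)⁻¹ * f j with hg_def
  have hbound : ∀ j, ‖g j‖ ≤ C * ‖f j‖ := by
    intro j
    have hSfac : ∑ ℓ ∈ Finset.Icc (-(M : ℤ)) (N : ℤ),
        Real.exp ((1 - s) * (k * ℓ)) * (Real.exp (k * ℓ) + lam j)⁻¹ * f j
        = (∑ ℓ ∈ Finset.Icc (-(M : ℤ)) (N : ℤ),
            Real.exp ((1 - s) * (k * ℓ)) * (Real.exp (k * ℓ) + lam j)⁻¹) * f j := by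
      rw [Finset.sum_mul]
    have hS0 : 0 ≤ ∑ ℓ ∈ Finset.Icc (-(M : ℤ)) (N : ℤ),
        Real.exp ((1 - s) * (k * ℓ)) * (Real.exp (k * ℓ) + lam j)⁻¹ := by
      refine Finset.sum_nonneg fun ℓ _ => ?_
      have : (0:ℝ) < Real.exp (k * ℓ) + lam j := by
        have := Real.exp_pos (k * (ℓ:ℝ)); have := lt_of_lt_of_le hlam1 (hlam j); linarith
      positivity
    have hcore := sinc_sum_core lam1 hlam1 (lam j) (hlam j) s k hs0 hs1 hk M N
    have hcoef : 0 ≤ k * Real.sin (Real.pi * s) / Real.pi := by positivity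
    have hgj : g j = (k * Real.sin (Real.pi * s) / Real.pi *
        ∑ ℓ ∈ Finset.Icc (-(M : ℤ)) (N : ℤ),
          Real.exp ((1 - s) * (k * ℓ)) * (Real.exp (k * ℓ) + lam j)⁻¹) * f j := by
      rw [hg_def]; simp only; rw [hSfac]; ring
    have habs : ‖g j‖ = (k * Real.sin (Real.pi * s) / Real.pi *
        ∑ ℓ ∈ Finset.Icc (-(M : ℤ)) (N : ℤ),
          Real.exp ((1 - s) * (k * ℓ)) * (Real.exp (k * ℓ) + lam j)⁻¹) * ‖f j‖ := by
      rw [hgj, norm_mul, Real.norm_eq_abs (k * Real.sin (Real.pi * s) / Real.pi * _),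
        abs_of_nonneg (mul_nonneg hcoef hS0)]
    rw [habs]
    refine mul_le_mul_of_nonneg_right ?_ (norm_nonneg _)
    have : k * Real.sin (Real.pi * s) / Real.pi *
        (∑ ℓ ∈ Finset.Icc (-(M : ℤ)) (N : ℤ),
          Real.exp ((1 - s) * (k * ℓ)) * (Real.exp (k * ℓ) + lam j)⁻¹)
        = (Real.sin (Real.pi * s) / Real.pi) *
          (k * ∑ ℓ ∈ Finset.Icc (-(M : ℤ)) (N : ℤ),
            Real.exp ((1 - s) * (k * ℓ)) * (Real.exp (k * ℓ) + lam j)⁻¹) := by ring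
    rw [this, hC_def, mul_assoc]
    exact mul_le_mul_of_nonneg_left hcore (by positivity)
  have hp2 : (0:ℝ) < (2 : ENNReal).toReal := by norm_num
  have hfs : Summable fun j => ‖f j‖ ^ (2 : ENNReal).toReal := (lp.memℓp f).summable hp2
  have hmem : Memℓp g 2 := by
    refine memℓp_gen ?_
    refine Summable.of_nonneg_of_le (fun j => by positivity) (fun j => ?_)
      (hfs.mul_left (C ^ (2 : ENNReal).toReal))
    calc ‖g j‖ ^ (2 : ENNReal).toReal ≤ (C * ‖f j‖) ^ (2 : ENNReal).toReal := by
          exact Real.rpow_le_rpow (norm_nonneg _) (hbound j) hp2.le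
      _ = C ^ (2 : ENNReal).toReal * ‖f j‖ ^ (2 : ENNReal).toReal :=
          Real.mul_rpow hC0 (norm_nonneg _)
  refine ⟨hmem, ?_⟩
  refine lp.norm_le_of_forall_sum_le hp2 (by positivity) (fun t => ?_)
  calc ∑ j ∈ t, ‖g j‖ ^ (2 : ENNReal).toReal
      ≤ ∑ j ∈ t, C ^ (2 : ENNReal).toReal * ‖f j‖ ^ (2 : ENNReal).toReal := by
        refine Finset.sum_le_sum fun j _ => ?_
        rw [← Real.mul_rpow hC0 (norm_nonneg _)]
        exact Real.rpow_le_rpow (norm_nonneg _) (hbound j) hp2.le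
    _ = C ^ (2 : ENNReal).toReal * ∑ j ∈ t, ‖f j‖ ^ (2 : ENNReal).toReal := by
        rw [Finset.mul_sum]
    _ ≤ C ^ (2 : ENNReal).toReal * ‖f‖ ^ (2 : ENNReal).toReal := by
        refine mul_le_mul_of_nonneg_left (lp.sum_rpow_le_norm_rpow hp2 f t) (by positivity)
    _ = (C * ‖f‖) ^ (2 : ENNReal).toReal := (Real.mul_rpow hC0 (norm_nonneg _)).symm
end

section
/- Let U and V be real vector spaces, let L : U → U and L_T : V → V be linear maps, let P, Q : U → V be linear maps, and let μ be a real scalar. Assume L, L_T, μ·id_U + L and μ·id_V + L_T are all bijective, and write T := L^{-1}, T_T := L_T^{-1}, R := (μ·id_U + L)^{-1}, R_T := (μ·id_V + L_T)^{-1}. Then P ∘ R − R_T ∘ Q = R_T ∘ ( L_T ∘ (P ∘ T − T_T ∘ Q) ∘ L + μ·(P − Q) ) ∘ R. -/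
/-- Algebraic error-representation identity (Section 4.4): let
`L : U → U`, `L_T : V → V`, `P, Q : U → V` be linear maps and `μ ∈ ℝ`. Assume `T`, `T_T`,
`R`, `R_T` are two-sided inverses of `L`, `L_T`, `μ·id + L`, `μ·id + L_T` respectively
(these exist exactly when the latter maps are bijective). Then
`P ∘ R − R_T ∘ Q = R_T ∘ (L_T ∘ (P ∘ T − T_T ∘ Q) ∘ L + μ(P − Q)) ∘ R`. -/
theorem error_representation {U V : Type*} [AddCommGroup U] [Module ℝ U]
    [AddCommGroup V] [Module ℝ V]
    (L T : U →ₗ[ℝ] U) (LT TT : V →ₗ[ℝ] V) (P Q : U →ₗ[ℝ] V) (μ : ℝ)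
    (R : U →ₗ[ℝ] U) (RT : V →ₗ[ℝ] V)
    (hT1 : L ∘ₗ T = LinearMap.id) (hT2 : T ∘ₗ L = LinearMap.id)
    (hTT1 : LT ∘ₗ TT = LinearMap.id) (hTT2 : TT ∘ₗ LT = LinearMap.id)
    (hR1 : (μ • LinearMap.id + L) ∘ₗ R = LinearMap.id)
    (hR2 : R ∘ₗ (μ • LinearMap.id + L) = LinearMap.id)
    (hRT1 : (μ • LinearMap.id + LT) ∘ₗ RT = LinearMap.id)
    (hRT2 : RT ∘ₗ (μ • LinearMap.id + LT) = LinearMap.id) :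
    P ∘ₗ R - RT ∘ₗ Q =
      RT ∘ₗ (LT ∘ₗ (P ∘ₗ T - TT ∘ₗ Q) ∘ₗ L + μ • (P - Q)) ∘ₗ R := by
  have hLR : L ∘ₗ R = LinearMap.id - μ • R := by
    have h := hR1
    rw [LinearMap.add_comp, LinearMap.smul_comp, LinearMap.id_comp] at h
    rw [eq_sub_iff_add_eq, add_comm]
    exact h
  have h1 : T ∘ₗ (L ∘ₗ R) = R := by
    rw [← LinearMap.comp_assoc, hT2, LinearMap.id_comp]
  have h2 : ∀ X : U →ₗ[ℝ] V, LT ∘ₗ (TT ∘ₗ X) = X := fun X => by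
    rw [← LinearMap.comp_assoc, hTT1, LinearMap.id_comp]
  have h3 : LT ∘ₗ (RT ∘ₗ Q) = Q - μ • (RT ∘ₗ Q) := by
    have h := hRT1
    rw [LinearMap.add_comp, LinearMap.smul_comp, LinearMap.id_comp] at h
    rw [← LinearMap.comp_assoc, eq_sub_iff_add_eq, add_comm, ← LinearMap.smul_comp]
    rw [← LinearMap.add_comp, h, LinearMap.id_comp]
  have h4 : Q ∘ₗ (L ∘ₗ R) = Q - μ • (Q ∘ₗ R) := by
    rw [hLR, LinearMap.comp_sub, LinearMap.comp_id, LinearMap.comp_smul]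
  have key : (μ • LinearMap.id + LT) ∘ₗ (P ∘ₗ R - RT ∘ₗ Q) =
      (LT ∘ₗ (P ∘ₗ T - TT ∘ₗ Q) ∘ₗ L + μ • (P - Q)) ∘ₗ R := by
    simp only [LinearMap.comp_sub, LinearMap.sub_comp, LinearMap.add_comp,
      LinearMap.comp_add, LinearMap.smul_comp, LinearMap.comp_smul,
      LinearMap.id_comp, LinearMap.comp_id, LinearMap.comp_assoc, h1, h2, h3,
      h4, LinearMap.comp_sub, smul_sub]
    abel
  calc P ∘ₗ R - RT ∘ₗ Q
      = RT ∘ₗ ((μ • LinearMap.id + LT) ∘ₗ (P ∘ₗ R - RT ∘ₗ Q)) := by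
        rw [← LinearMap.comp_assoc, hRT2, LinearMap.id_comp]
    _ = RT ∘ₗ (LT ∘ₗ (P ∘ₗ T - TT ∘ₗ Q) ∘ₗ L + μ • (P - Q)) ∘ₗ R := by rw [key]
end

section
/- Let A be a unital C*-algebra, let λ₁ > 0, and let a ∈ A be a selfadjoint element with spectrum contained in [λ₁, ∞). Let s ∈ (0,1), ε ∈ (0, 2s], k ∈ (0,1], and let M, N be nonnegative integers. Then each e^{kℓ}·1 + a is invertible and ‖ a^{s-ε/2} · (k·sin(πs)/π) · ∑_{ℓ=-M}^{N} e^{(1-s)kℓ} (e^{kℓ}·1 + a)^{-1} ‖ ≤ C · max(1, ε^{-1}), where a^{s-ε/2} is defined by the continuous functional calculus applied to x ↦ x^{s-ε/2} and C depends only on s and λ₁ (not on k, M, N, or ε). -/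
open Finset in
lemma geom_aux (c : ℝ) (hc0 : 0 < c) (hc1 : c ≤ 1) (T : Finset ℤ) (n : ℤ → ℤ)
    (hinj : Set.InjOn n T) (hn : ∀ ℓ ∈ T, 0 ≤ n ℓ) :
    ∑ ℓ ∈ T, Real.exp (-(c * n ℓ)) ≤ 2 / c := by
  set r : ℝ := Real.exp (-c) with hr
  have hr0 : 0 ≤ r := (Real.exp_pos _).le
  have hr1 : r < 1 := by rw [hr, Real.exp_lt_one_iff]; linarith
  have key : ∀ ℓ ∈ T, Real.exp (-(c * n ℓ)) = r ^ (n ℓ).toNat := by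
    intro ℓ hℓ
    rw [hr, ← Real.exp_nat_mul]
    congr 1
    have h := Int.toNat_of_nonneg (hn ℓ hℓ)
    have h' : ((n ℓ).toNat : ℝ) = ((n ℓ : ℤ) : ℝ) := by exact_mod_cast congrArg (fun z : ℤ => (z : ℝ)) h
    rw [h']; ring
  rw [Finset.sum_congr rfl key]
  have hm : ∀ x ∈ T, ∀ y ∈ T, (n x).toNat = (n y).toNat → x = y := by
    intro x hx y hy h
    have hx' := hn x hx; have hy' := hn y hy
    exact hinj hx hy (by omega)
  calc ∑ ℓ ∈ T, r ^ (n ℓ).toNat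
      = ∑ j ∈ T.image (fun ℓ => (n ℓ).toNat), r ^ j := (Finset.sum_image hm).symm
    _ ≤ ∑' j : ℕ, r ^ j :=
        Summable.sum_le_tsum _ (fun j _ => pow_nonneg hr0 j) (summable_geometric_of_lt_one hr0 hr1)
    _ = (1 - r)⁻¹ := tsum_geometric_of_lt_one hr0 hr1
    _ ≤ 2 / c := by
        have h1 : r ≤ (1 + c)⁻¹ := by
          have he := Real.add_one_le_exp c
          rw [hr, Real.exp_neg]
          exact inv_anti₀ (by linarith) (by linarith)
        have h2 : c / 2 ≤ 1 - r := by
          have hinv : (1 + c)⁻¹ ≤ 1 - c / 2 := by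
            rw [inv_le_iff_one_le_mul₀ (by linarith)]
            nlinarith
          linarith
        have := inv_anti₀ (by linarith) h2
        calc (1 - r)⁻¹ ≤ (c / 2)⁻¹ := this
          _ = 2 / c := by rw [inv_div]

lemma sinc_scalar (s k x : ℝ) (hs0 : 0 < s) (hs1 : s < 1) (hk0 : 0 < k) (hk1 : k ≤ 1)
    (hx : 0 < x) (M N : ℕ) :
    k * ∑ ℓ ∈ Finset.Icc (-(M : ℤ)) (N : ℤ),
        Real.exp ((1 - s) * (k * ℓ)) * (Real.exp (k * ℓ) + x)⁻¹
      ≤ (2 / (1 - s) + 2 / s) * x ^ (-s) := by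
  set L : ℤ := ⌊Real.log x / k⌋ with hL
  have hxs : (0:ℝ) < x ^ (-s) := Real.rpow_pos_of_pos hx _
  have hkL : k * L ≤ Real.log x := by
    have := Int.floor_le (Real.log x / k)
    calc k * L ≤ k * (Real.log x / k) := by
          exact mul_le_mul_of_nonneg_left this hk0.le
      _ = Real.log x := by field_simp
  have hkL1 : Real.log x ≤ k * (L + 1) := by
    have := (Int.lt_floor_add_one (Real.log x / k)).le
    calc Real.log x = k * (Real.log x / k) := by field_simp
      _ ≤ k * (L + 1) := by
          apply mul_le_mul_of_nonneg_left _ hk0.le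
          exact_mod_cast this
  rw [← Finset.sum_filter_add_sum_filter_not (Finset.Icc (-(M:ℤ)) (N:ℤ)) (fun ℓ => ℓ ≤ L)]
  have h1 : ∑ ℓ ∈ (Finset.Icc (-(M:ℤ)) (N:ℤ)).filter (fun ℓ => ℓ ≤ L),
      Real.exp ((1 - s) * (k * ℓ)) * (Real.exp (k * ℓ) + x)⁻¹
      ≤ x ^ (-s) * (2 / ((1 - s) * k)) := by
    have step : ∀ ℓ ∈ (Finset.Icc (-(M:ℤ)) (N:ℤ)).filter (fun ℓ => ℓ ≤ L),
        Real.exp ((1 - s) * (k * ℓ)) * (Real.exp (k * ℓ) + x)⁻¹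
          ≤ x ^ (-s) * Real.exp (-(((1 - s) * k) * ((L - ℓ : ℤ) : ℝ))) := by
      intro ℓ hℓ
      have hℓL : ℓ ≤ L := (Finset.mem_filter.mp hℓ).2
      have e1 : Real.exp ((1 - s) * (k * ℓ)) * (Real.exp (k * ℓ) + x)⁻¹
          ≤ Real.exp ((1 - s) * (k * ℓ)) * x⁻¹ := by
        apply mul_le_mul_of_nonneg_left _ (Real.exp_pos _).le
        exact inv_anti₀ hx (by linarith [(Real.exp_pos (k * ℓ)).le])
      refine e1.trans ?_
      have e2 : Real.exp ((1 - s) * (k * ℓ))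
          = Real.exp ((1 - s) * (k * L)) * Real.exp (-(((1 - s) * k) * ((L - ℓ : ℤ) : ℝ))) := by
        rw [← Real.exp_add]; congr 1; push_cast; ring
      have e3 : Real.exp ((1 - s) * (k * L)) ≤ x ^ ((1:ℝ) - s) := by
        rw [Real.rpow_def_of_pos hx]
        exact Real.exp_le_exp.mpr (by nlinarith)
      have e4 : x ^ ((1:ℝ) - s) * x⁻¹ = x ^ (-s) := by
        rw [← Real.rpow_neg_one x, ← Real.rpow_add hx]
        congr 1; ring
      calc Real.exp ((1 - s) * (k * ℓ)) * x⁻¹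
          = Real.exp ((1 - s) * (k * L)) * x⁻¹ * Real.exp (-(((1 - s) * k) * ((L - ℓ : ℤ) : ℝ))) := by
            rw [e2]; ring
        _ ≤ x ^ ((1:ℝ) - s) * x⁻¹ * Real.exp (-(((1 - s) * k) * ((L - ℓ : ℤ) : ℝ))) := by
            apply mul_le_mul_of_nonneg_right _ (Real.exp_pos _).le
            exact mul_le_mul_of_nonneg_right e3 (by positivity)
        _ = x ^ (-s) * Real.exp (-(((1 - s) * k) * ((L - ℓ : ℤ) : ℝ))) := by rw [e4]
    calc ∑ ℓ ∈ (Finset.Icc (-(M:ℤ)) (N:ℤ)).filter (fun ℓ => ℓ ≤ L),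
        Real.exp ((1 - s) * (k * ℓ)) * (Real.exp (k * ℓ) + x)⁻¹
        ≤ ∑ ℓ ∈ (Finset.Icc (-(M:ℤ)) (N:ℤ)).filter (fun ℓ => ℓ ≤ L),
            x ^ (-s) * Real.exp (-(((1 - s) * k) * ((L - ℓ : ℤ) : ℝ))) := Finset.sum_le_sum step
      _ = x ^ (-s) * ∑ ℓ ∈ (Finset.Icc (-(M:ℤ)) (N:ℤ)).filter (fun ℓ => ℓ ≤ L),
            Real.exp (-(((1 - s) * k) * ((L - ℓ : ℤ) : ℝ))) := by rw [Finset.mul_sum]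
      _ ≤ x ^ (-s) * (2 / ((1 - s) * k)) := by
          apply mul_le_mul_of_nonneg_left _ hxs.le
          apply geom_aux ((1 - s) * k) (by nlinarith) (by nlinarith) _ (fun ℓ => L - ℓ)
          · intro u hu v hv huv; simp only at huv; omega
          · intro ℓ hℓ; simp only [Finset.mem_filter] at hℓ; omega
  have h2 : ∑ ℓ ∈ (Finset.Icc (-(M:ℤ)) (N:ℤ)).filter (fun ℓ => ¬ℓ ≤ L),
      Real.exp ((1 - s) * (k * ℓ)) * (Real.exp (k * ℓ) + x)⁻¹
      ≤ x ^ (-s) * (2 / (s * k)) := by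
    have step : ∀ ℓ ∈ (Finset.Icc (-(M:ℤ)) (N:ℤ)).filter (fun ℓ => ¬ℓ ≤ L),
        Real.exp ((1 - s) * (k * ℓ)) * (Real.exp (k * ℓ) + x)⁻¹
          ≤ x ^ (-s) * Real.exp (-((s * k) * ((ℓ - (L + 1) : ℤ) : ℝ))) := by
      intro ℓ hℓ
      have hℓL : L + 1 ≤ ℓ := by have := (Finset.mem_filter.mp hℓ).2; omega
      have e1 : Real.exp ((1 - s) * (k * ℓ)) * (Real.exp (k * ℓ) + x)⁻¹
          ≤ Real.exp ((1 - s) * (k * ℓ)) * (Real.exp (k * ℓ))⁻¹ := by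
        apply mul_le_mul_of_nonneg_left _ (Real.exp_pos _).le
        exact inv_anti₀ (Real.exp_pos _) (by linarith)
      have e1' : Real.exp ((1 - s) * (k * ℓ)) * (Real.exp (k * ℓ))⁻¹
          = Real.exp (-(s * (k * ℓ))) := by
        rw [← Real.exp_neg, ← Real.exp_add]; congr 1; ring
      have e2 : Real.exp (-(s * (k * ℓ)))
          = Real.exp (-(s * (k * (L + 1)))) * Real.exp (-((s * k) * ((ℓ - (L + 1) : ℤ) : ℝ))) := by
        rw [← Real.exp_add]; congr 1; push_cast; ring
      have e3 : Real.exp (-(s * (k * (L + 1)))) ≤ x ^ (-s) := by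
        rw [Real.rpow_def_of_pos hx]
        apply Real.exp_le_exp.mpr
        have : Real.log x ≤ k * ((L:ℝ) + 1) := by exact_mod_cast hkL1
        nlinarith
      calc Real.exp ((1 - s) * (k * ℓ)) * (Real.exp (k * ℓ) + x)⁻¹
          ≤ Real.exp (-(s * (k * ℓ))) := by rw [← e1']; exact e1
        _ = Real.exp (-(s * (k * (L + 1)))) * Real.exp (-((s * k) * ((ℓ - (L + 1) : ℤ) : ℝ))) := e2
        _ ≤ x ^ (-s) * Real.exp (-((s * k) * ((ℓ - (L + 1) : ℤ) : ℝ))) :=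
            mul_le_mul_of_nonneg_right e3 (Real.exp_pos _).le
    calc ∑ ℓ ∈ (Finset.Icc (-(M:ℤ)) (N:ℤ)).filter (fun ℓ => ¬ℓ ≤ L),
        Real.exp ((1 - s) * (k * ℓ)) * (Real.exp (k * ℓ) + x)⁻¹
        ≤ ∑ ℓ ∈ (Finset.Icc (-(M:ℤ)) (N:ℤ)).filter (fun ℓ => ¬ℓ ≤ L),
            x ^ (-s) * Real.exp (-((s * k) * ((ℓ - (L + 1) : ℤ) : ℝ))) := Finset.sum_le_sum step
      _ = x ^ (-s) * ∑ ℓ ∈ (Finset.Icc (-(M:ℤ)) (N:ℤ)).filter (fun ℓ => ¬ℓ ≤ L),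
            Real.exp (-((s * k) * ((ℓ - (L + 1) : ℤ) : ℝ))) := by rw [Finset.mul_sum]
      _ ≤ x ^ (-s) * (2 / (s * k)) := by
          apply mul_le_mul_of_nonneg_left _ hxs.le
          apply geom_aux (s * k) (by nlinarith) (by nlinarith) _ (fun ℓ => ℓ - (L + 1))
          · intro u hu v hv huv; simp only at huv; omega
          · intro ℓ hℓ; simp only [Finset.mem_filter] at hℓ; omega
  have e : ∀ c : ℝ, c ≠ 0 → k * (2 / (c * k)) = 2 / c := by
    intro c hc; field_simp
  have hfinal : k * (x ^ (-s) * (2 / ((1 - s) * k)) + x ^ (-s) * (2 / (s * k)))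
      = (2 / (1 - s) + 2 / s) * x ^ (-s) := by
    calc k * (x ^ (-s) * (2 / ((1 - s) * k)) + x ^ (-s) * (2 / (s * k)))
        = x ^ (-s) * (k * (2 / ((1 - s) * k))) + x ^ (-s) * (k * (2 / (s * k))) := by ring
      _ = x ^ (-s) * (2 / (1 - s)) + x ^ (-s) * (2 / s) := by
          rw [e (1 - s) (by linarith), e s hs0.ne']
      _ = (2 / (1 - s) + 2 / s) * x ^ (-s) := by ring
  calc k * _ ≤ k * (x ^ (-s) * (2 / ((1 - s) * k)) + x ^ (-s) * (2 / (s * k))) := by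
        apply mul_le_mul_of_nonneg_left _ hk0.le
        exact add_le_add h1 h2
    _ = (2 / (1 - s) + 2 / s) * x ^ (-s) := hfinal

lemma sinc_scalar_full (s lam1 ε k : ℝ) (hs0 : 0 < s) (hs1 : s < 1) (hlam1 : 0 < lam1)
    (hε0 : 0 < ε) (hε2s : ε ≤ 2 * s) (hk0 : 0 < k) (hk1 : k ≤ 1) (M N : ℕ)
    (x : ℝ) (hx : lam1 ≤ x) :
    |x ^ (s - ε / 2) * ((k * Real.sin (Real.pi * s) / Real.pi) *
        ∑ ℓ ∈ Finset.Icc (-(M : ℤ)) (N : ℤ),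
          Real.exp ((1 - s) * (k * ℓ)) * (Real.exp (k * ℓ) + x)⁻¹)|
      ≤ (2 / (1 - s) + 2 / s) * max 1 lam1⁻¹ := by
  have hx0 : 0 < x := lt_of_lt_of_le hlam1 hx
  have h1s : 0 < 1 - s := by linarith
  have hD0 : (0:ℝ) ≤ 2 / (1 - s) + 2 / s := by positivity
  have hsum0 : 0 ≤ ∑ ℓ ∈ Finset.Icc (-(M : ℤ)) (N : ℤ),
      Real.exp ((1 - s) * (k * ℓ)) * (Real.exp (k * ℓ) + x)⁻¹ := by
    apply Finset.sum_nonneg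
    intro ℓ _
    have := Real.exp_pos (k * ℓ)
    positivity
  have hsin0 : 0 ≤ Real.sin (Real.pi * s) := by
    apply Real.sin_nonneg_of_nonneg_of_le_pi
    · positivity
    · nlinarith [Real.pi_pos]
  have hxp0 : (0:ℝ) ≤ x ^ (s - ε / 2) := (Real.rpow_pos_of_pos hx0 _).le
  rw [abs_of_nonneg (mul_nonneg hxp0 (mul_nonneg (by positivity) hsum0))]
  calc x ^ (s - ε / 2) * ((k * Real.sin (Real.pi * s) / Real.pi) *
        ∑ ℓ ∈ Finset.Icc (-(M : ℤ)) (N : ℤ),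
          Real.exp ((1 - s) * (k * ℓ)) * (Real.exp (k * ℓ) + x)⁻¹)
      ≤ x ^ (s - ε / 2) * (k *
        ∑ ℓ ∈ Finset.Icc (-(M : ℤ)) (N : ℤ),
          Real.exp ((1 - s) * (k * ℓ)) * (Real.exp (k * ℓ) + x)⁻¹) := by
        apply mul_le_mul_of_nonneg_left _ hxp0
        apply mul_le_mul_of_nonneg_right _ hsum0
        rw [div_le_iff₀ Real.pi_pos]
        nlinarith [Real.sin_le_one (Real.pi * s), Real.pi_gt_three]
    _ ≤ x ^ (s - ε / 2) * ((2 / (1 - s) + 2 / s) * x ^ (-s)) :=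
        mul_le_mul_of_nonneg_left (sinc_scalar s k x hs0 hs1 hk0 hk1 hx0 M N) hxp0
    _ = (2 / (1 - s) + 2 / s) * x ^ (-(ε / 2)) := by
        rw [mul_comm, mul_assoc]
        congr 1
        rw [← Real.rpow_add hx0]
        congr 1
        ring
    _ ≤ (2 / (1 - s) + 2 / s) * max 1 lam1⁻¹ := by
        apply mul_le_mul_of_nonneg_left _ hD0
        rcases le_total 1 x with h | h
        · exact le_trans (Real.rpow_le_one_of_one_le_of_nonpos h (by linarith)) (le_max_left _ _)
        · calc x ^ (-(ε / 2)) ≤ x ^ (-1 : ℝ) :=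
              Real.rpow_le_rpow_of_exponent_ge hx0 h (by linarith)
            _ = x⁻¹ := Real.rpow_neg_one x
            _ ≤ lam1⁻¹ := inv_anti₀ hlam1 hx
            _ ≤ max 1 lam1⁻¹ := le_max_right _ _


/-- Operator-multiplier form of the sinc quadrature stability lemma
(Lemma 4.1): for `s ∈ (0,1)` and `λ₁ > 0` there is a constant `C` depending only on `s`
and `λ₁` such that for every unital C*-algebra `A`, every selfadjoint `a ∈ A` with
spectrum contained in `[λ₁,∞)`, every `ε ∈ (0,2s]`, `k ∈ (0,1]` and all nonnegative
integers `M, N`: each `e^{kℓ}·1 + a` is invertible, and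
`‖a^{s-ε/2} · (k sin(πs)/π) ∑_{ℓ=-M}^{N} e^{(1-s)kℓ} (e^{kℓ}·1+a)⁻¹‖ ≤ C max(1, ε⁻¹)`,
where `a^{s-ε/2} := cfc (x ↦ x^{s-ε/2}) a`. -/
theorem sinc_stability_operator (s lam1 : ℝ) (hs0 : 0 < s) (hs1 : s < 1)
    (hlam1 : 0 < lam1) :
    ∃ C : ℝ, 0 < C ∧
      ∀ (A : Type) [CStarAlgebra A] (a : A), IsSelfAdjoint a →
        spectrum ℝ a ⊆ Set.Ici lam1 →
        ∀ (ε k : ℝ), 0 < ε → ε ≤ 2 * s → 0 < k → k ≤ 1 → ∀ (M N : ℕ),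
          (∀ ℓ : ℤ, IsUnit (Real.exp (k * ℓ) • (1 : A) + a)) ∧
          ‖cfc (fun x : ℝ => x ^ (s - ε / 2)) a *
              ((k * Real.sin (Real.pi * s) / Real.pi) •
                ∑ ℓ ∈ Finset.Icc (-(M : ℤ)) (N : ℤ),
                  Real.exp ((1 - s) * (k * ℓ)) •
                    Ring.inverse (Real.exp (k * ℓ) • (1 : A) + a))‖ ≤
            C * max 1 ε⁻¹ := by
  have h1s : 0 < 1 - s := by linarith
  refine ⟨(2 / (1 - s) + 2 / s) * max 1 lam1⁻¹, by positivity, ?_⟩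
  intro A _ a ha hspec ε k hε0 hε2s hk0 hk1 M N
  have hx0 : ∀ x ∈ spectrum ℝ a, 0 < x := fun x hx => lt_of_lt_of_le hlam1 (hspec hx)
  have hne : ∀ (ℓ : ℤ) (x : ℝ), x ∈ spectrum ℝ a → Real.exp (k * ℓ) + x ≠ 0 :=
    fun ℓ x hx => ne_of_gt (add_pos (Real.exp_pos _) (hx0 x hx))
  have hcont_inv : ∀ ℓ : ℤ,
      ContinuousOn (fun x : ℝ => (Real.exp (k * ℓ) + x)⁻¹) (spectrum ℝ a) := fun ℓ =>
    (continuousOn_const.add continuousOn_id).inv₀ (fun x hx => hne ℓ x hx)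
  have h1 : ∀ ℓ : ℤ, Real.exp (k * ℓ) • (1 : A) + a
      = cfc (fun x : ℝ => Real.exp (k * ℓ) + x) a := by
    intro ℓ
    rw [cfc_const_add (Real.exp (k * ℓ)) (fun x : ℝ => x) a continuousOn_id ha,
      cfc_id' ℝ a, Algebra.algebraMap_eq_smul_one]
  have hunit : ∀ ℓ : ℤ, IsUnit (Real.exp (k * ℓ) • (1 : A) + a) := by
    intro ℓ
    rw [h1 ℓ]
    exact (isUnit_cfc_iff _ a (continuousOn_const.add continuousOn_id) ha).mpr
      (fun x hx => hne ℓ x hx)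
  refine ⟨hunit, ?_⟩
  have h2 : ∀ ℓ : ℤ, Ring.inverse (Real.exp (k * ℓ) • (1 : A) + a)
      = cfc (fun x : ℝ => (Real.exp (k * ℓ) + x)⁻¹) a := by
    intro ℓ
    rw [h1 ℓ, ← cfc_inv (fun x : ℝ => Real.exp (k * ℓ) + x) a (fun x hx => hne ℓ x hx)
      (continuousOn_const.add continuousOn_id) ha]
  have h3 : ∀ ℓ : ℤ, Real.exp ((1 - s) * (k * ℓ)) •
        Ring.inverse (Real.exp (k * ℓ) • (1 : A) + a)
      = cfc (fun x : ℝ => Real.exp ((1 - s) * (k * ℓ)) * (Real.exp (k * ℓ) + x)⁻¹) a := by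
    intro ℓ
    rw [h2 ℓ, ← cfc_const_mul (Real.exp ((1 - s) * (k * ℓ)))
      (fun x : ℝ => (Real.exp (k * ℓ) + x)⁻¹) a (hcont_inv ℓ)]
  have hsum : ∑ ℓ ∈ Finset.Icc (-(M : ℤ)) (N : ℤ), Real.exp ((1 - s) * (k * ℓ)) •
        Ring.inverse (Real.exp (k * ℓ) • (1 : A) + a)
      = cfc (fun x : ℝ => ∑ ℓ ∈ Finset.Icc (-(M : ℤ)) (N : ℤ),
          Real.exp ((1 - s) * (k * ℓ)) * (Real.exp (k * ℓ) + x)⁻¹) a := by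
    rw [Finset.sum_congr rfl (fun ℓ _ => h3 ℓ)]
    rw [← cfc_sum (fun ℓ : ℤ => fun x : ℝ =>
        Real.exp ((1 - s) * (k * ℓ)) * (Real.exp (k * ℓ) + x)⁻¹) a
      (Finset.Icc (-(M : ℤ)) (N : ℤ))
      (fun ℓ _ => continuousOn_const.mul (hcont_inv ℓ))]
    congr 1
    ext x
    simp
  have hFcont : ContinuousOn (fun x : ℝ => ∑ ℓ ∈ Finset.Icc (-(M : ℤ)) (N : ℤ),
      Real.exp ((1 - s) * (k * ℓ)) * (Real.exp (k * ℓ) + x)⁻¹) (spectrum ℝ a) := by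
    apply continuousOn_finset_sum
    exact fun ℓ _ => continuousOn_const.mul (hcont_inv ℓ)
  have hgcont : ContinuousOn (fun x : ℝ => x ^ (s - ε / 2)) (spectrum ℝ a) := fun x hx =>
    (Real.continuousAt_rpow_const x _ (Or.inl (ne_of_gt (hx0 x hx)))).continuousWithinAt
  rw [hsum, ← cfc_const_mul (k * Real.sin (Real.pi * s) / Real.pi) _ a hFcont,
    ← cfc_mul _ (g := fun x : ℝ => k * Real.sin (Real.pi * s) / Real.pi *
        ∑ ℓ ∈ Finset.Icc (-(M : ℤ)) (N : ℤ),
          Real.exp ((1 - s) * (k * ℓ)) * (Real.exp (k * ℓ) + x)⁻¹) a hgcont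
      (continuousOn_const.mul hFcont)]
  apply norm_cfc_le (by positivity)
  intro x hx
  rw [Real.norm_eq_abs]
  calc |x ^ (s - ε / 2) * (k * Real.sin (Real.pi * s) / Real.pi *
        ∑ ℓ ∈ Finset.Icc (-(M : ℤ)) (N : ℤ),
          Real.exp ((1 - s) * (k * ℓ)) * (Real.exp (k * ℓ) + x)⁻¹)|
      ≤ (2 / (1 - s) + 2 / s) * max 1 lam1⁻¹ :=
        sinc_scalar_full s lam1 ε k hs0 hs1 hlam1 hε0 hε2s hk0 hk1 M N x (hspec hx)
    _ ≤ (2 / (1 - s) + 2 / s) * max 1 lam1⁻¹ * max 1 ε⁻¹ :=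
        le_mul_of_one_le_right (by positivity) (le_max_left _ _)
end

section
/- Let s ∈ (0,1), ε ∈ (0, 2s], t ∈ ℝ and μ > 0. Then for every real sequence f = (f_j)_{j≥1} with ∑_{j≥1} λ_j^{t-2s} f_j² < ∞, one has ∑_{j≥1} λ_j^{t-ε} ((μ+λ_j)^{-1} f_j)² ≤ max(1, λ₁^{-1})² · min(1, μ^{s-1-ε/2})² · ∑_{j≥1} λ_j^{t-2s} f_j²; equivalently ‖(μI+L)^{-1} f‖_{Ḣ^{t-ε}} ≤ max(1, λ₁^{-1}) · min(1, μ^{s-1-ε/2}) · ‖f‖_{Ḣ^{t-2s}}. -/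
/-- Per-quadrature-point resolvent smoothing bound (from the proof of
the sinc stability lemma): with eigenvalues `λ_j ≥ λ₁ > 0`, for `s ∈ (0,1)`,
`ε ∈ (0,2s]`, `t ∈ ℝ` and `μ > 0`, for every sequence `f` with `∑ λ_j^{t-2s} f_j² < ∞`,
the series `∑ λ_j^{t-ε} ((μ+λ_j)⁻¹ f_j)²` converges and
`∑ λ_j^{t-ε} ((μ+λ_j)⁻¹ f_j)² ≤ max(1,λ₁⁻¹)² min(1, μ^{s-1-ε/2})² ∑ λ_j^{t-2s} f_j²`,
i.e. `‖(μI+L)⁻¹ f‖_{Ḣ^{t-ε}} ≤ max(1,λ₁⁻¹) min(1, μ^{s-1-ε/2}) ‖f‖_{Ḣ^{t-2s}}`. -/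
theorem resolvent_smoothing (lam1 : ℝ) (hlam1 : 0 < lam1) (lam : ℕ → ℝ)
    (hlam : ∀ j, lam1 ≤ lam j) (s ε t μ : ℝ) (hs0 : 0 < s) (hs1 : s < 1)
    (hε0 : 0 < ε) (hε : ε ≤ 2 * s) (hμ : 0 < μ)
    (f : ℕ → ℝ) (hf : Summable fun j => lam j ^ (t - 2 * s) * f j ^ 2) :
    Summable (fun j => lam j ^ (t - ε) * ((μ + lam j)⁻¹ * f j) ^ 2) ∧
    ∑' j, lam j ^ (t - ε) * ((μ + lam j)⁻¹ * f j) ^ 2 ≤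
      (max 1 lam1⁻¹) ^ 2 * min 1 (μ ^ (s - 1 - ε / 2)) ^ 2 *
        ∑' j, lam j ^ (t - 2 * s) * f j ^ 2 := by
  set C : ℝ := max 1 lam1⁻¹ with hC
  set m : ℝ := min 1 (μ ^ (s - 1 - ε / 2)) with hm
  set a : ℝ := s - ε / 2 with ha
  have ha0 : 0 ≤ a := by simp only [ha]; linarith
  have ha1 : a ≤ 1 := by simp only [ha]; linarith
  have hC1 : 1 ≤ C := le_max_left _ _
  have hC0 : 0 ≤ C := le_trans zero_le_one hC1
  have hm0 : 0 ≤ m := le_min zero_le_one (Real.rpow_nonneg hμ.le _)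
  -- pointwise bound
  have key : ∀ j, lam j ^ (t - ε) * ((μ + lam j)⁻¹ * f j) ^ 2 ≤
      (C * m) ^ 2 * (lam j ^ (t - 2 * s) * f j ^ 2) := by
    intro j
    have hl0 : 0 < lam j := lt_of_lt_of_le hlam1 (hlam j)
    have hml : 0 < μ + lam j := by linarith
    -- λ^a ≤ C*(μ+λ)
    have h1 : lam j ^ a ≤ C * (μ + lam j) := by
      rcases le_or_gt 1 (lam j) with h | h
      · calc lam j ^ a ≤ lam j ^ (1:ℝ) :=
              Real.rpow_le_rpow_of_exponent_le h ha1
          _ = lam j := Real.rpow_one _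
          _ ≤ 1 * (μ + lam j) := by linarith
          _ ≤ C * (μ + lam j) := by
              apply mul_le_mul_of_nonneg_right hC1 hml.le
      · calc lam j ^ a ≤ 1 := Real.rpow_le_one hl0.le h.le ha0
          _ = lam1⁻¹ * lam1 := (inv_mul_cancel₀ hlam1.ne').symm
          _ ≤ C * (μ + lam j) := by
              apply mul_le_mul (le_max_right _ _) (by linarith [hlam j])
                hlam1.le hC0
    -- λ^a ≤ C * μ^{a-1} * (μ+λ)
    have h2 : lam j ^ a ≤ C * μ ^ (s - 1 - ε / 2) * (μ + lam j) := by
      have hae : s - 1 - ε / 2 = a - 1 := by simp only [ha]; ring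
      have hgm : lam j ^ a * μ ^ (1 - a) ≤ a * lam j + (1 - a) * μ :=
        Real.geom_mean_le_arith_mean2_weighted ha0 (by linarith) hl0.le hμ.le
          (by ring)
      have h3 : lam j ^ a * μ ^ (1 - a) ≤ μ + lam j := by
        nlinarith [hl0, hμ, ha0, ha1]
      rw [hae]
      have hμne : μ ≠ 0 := hμ.ne'
      have : μ ^ (a - 1) = (μ ^ (1 - a))⁻¹ := by
        rw [← Real.rpow_neg hμ.le]; ring_nf
      rw [this]
      have hpow : 0 < μ ^ (1 - a) := Real.rpow_pos_of_pos hμ _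
      have heq : C * (μ ^ (1 - a))⁻¹ * (μ + lam j)
          = C * (μ + lam j) / μ ^ (1 - a) := by ring
      rw [heq, le_div_iff₀ hpow]
      exact h3.trans (le_mul_of_one_le_left hml.le hC1)
    -- combine: λ^a ≤ C*m*(μ+λ)
    have h4 : lam j ^ a ≤ C * m * (μ + lam j) := by
      rcases min_cases (1:ℝ) (μ ^ (s - 1 - ε / 2)) with ⟨he, _⟩ | ⟨he, _⟩
      · rw [hm, he, mul_one]; exact h1
      · rw [hm, he]; exact h2
    have h5 : lam j ^ a * (μ + lam j)⁻¹ ≤ C * m := by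
      rw [← div_eq_mul_inv, div_le_iff₀ hml]; exact h4
    have h6 : (lam j ^ a * (μ + lam j)⁻¹) ^ 2 ≤ (C * m) ^ 2 := by
      apply pow_le_pow_left₀ (by positivity) h5
    have hsplit : lam j ^ (t - ε) = lam j ^ (t - 2 * s) * (lam j ^ a) ^ 2 := by
      rw [sq, ← Real.rpow_add hl0, ← Real.rpow_add hl0]
      congr 1; simp only [ha]; ring
    calc lam j ^ (t - ε) * ((μ + lam j)⁻¹ * f j) ^ 2
        = (lam j ^ a * (μ + lam j)⁻¹) ^ 2 * (lam j ^ (t - 2 * s) * f j ^ 2) := by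
          rw [hsplit]; ring
      _ ≤ (C * m) ^ 2 * (lam j ^ (t - 2 * s) * f j ^ 2) := by
          apply mul_le_mul_of_nonneg_right h6 (by positivity)
  have hS : Summable (fun j => lam j ^ (t - ε) * ((μ + lam j)⁻¹ * f j) ^ 2) := by
    apply Summable.of_nonneg_of_le (fun j => ?_) key (hf.mul_left _)
    exact mul_nonneg (Real.rpow_nonneg (lt_of_lt_of_le hlam1 (hlam j)).le _) (sq_nonneg _)
  refine ⟨hS, ?_⟩
  calc ∑' j, lam j ^ (t - ε) * ((μ + lam j)⁻¹ * f j) ^ 2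
      ≤ ∑' j, (C * m) ^ 2 * (lam j ^ (t - 2 * s) * f j ^ 2) :=
        Summable.tsum_le_tsum key hS (hf.mul_left _)
    _ = C ^ 2 * m ^ 2 * ∑' j, lam j ^ (t - 2 * s) * f j ^ 2 := by
        rw [tsum_mul_left, mul_pow]
end
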